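/- Let V be a finite-dimensional vector space over a field K, let k ≥ 1, and let S be a basis of the direct sum V^{⊕k}. Then S can be partitioned into subsets B₁, …, B_k such that for each 1 ≤ ℓ ≤ k, the images of the elements of B_ℓ under the ℓ-th coordinate projection π_ℓ : V^{⊕k} → V form a basis of V. -/

import Mathlib

/-- A basis of `V^{⊕k}` can be partitioned into `k` subsets `B₁, …, B_k`
such that for each `ℓ` the images of the elements of `B_ℓ` under the `ℓ`-th coordinate
projection form a basis of `V`. -/
theorem stmt_1 {K V : Type*} [Field K] [AddCommGroup V] [Module K V]
    [FiniteDimensional K V] {k : ℕ} (hk : 1 ≤ k)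
    {ι : Type*} [Fintype ι] [DecidableEq ι] (b : Module.Basis ι K (Fin k → V)) :
    ∃ B : Fin k → Finset ι,
      (∀ ℓ ℓ' : Fin k, ℓ ≠ ℓ' → Disjoint (B ℓ) (B ℓ')) ∧
      (Finset.univ.biUnion B = Finset.univ) ∧
      (∀ ℓ : Fin k,
        LinearIndependent K (fun i : B ℓ => b i ℓ) ∧
        Submodule.span K (Set.range (fun i : B ℓ => b i ℓ)) = ⊤) := by
  classical
  set n := Module.finrank K V with hn
  -- the "rank-one" pieces of each basis vector
  set g : ι → Fin k → (Fin k → V) :=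
    fun i ℓ => (fun m => if ℓ = m then b i ℓ else 0) with hg
  have hsum : ∀ i, (∑ ℓ : Fin k, g i ℓ) = b i := by
    intro i
    funext m
    simp only [Finset.sum_apply, hg]
    simp
  have hdet : (b.det fun i => ∑ ℓ : Fin k, g i ℓ) = 1 := by
    have : (fun i => ∑ ℓ : Fin k, g i ℓ) = ⇑b := funext hsum
    rw [this, Module.Basis.det_self]
  have hexp := (b.det.toMultilinearMap).map_sum g
  have hne : ∃ f : ι → Fin k, b.det (fun i => g i (f i)) ≠ 0 := by
    by_contra h
    push_neg at h
    have : (b.det fun i => ∑ ℓ : Fin k, g i ℓ) = 0 := by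
      rw [show (b.det fun i => ∑ ℓ : Fin k, g i ℓ)
          = b.det.toMultilinearMap fun i => ∑ ℓ : Fin k, g i ℓ from rfl, hexp]
      exact Finset.sum_eq_zero fun f _ => h f
    rw [hdet] at this
    exact one_ne_zero this
  obtain ⟨f, hf⟩ := hne
  have hindep : LinearIndependent K (fun i => g i (f i)) := by
    by_contra h
    exact hf (b.det.map_linearDependent _ h)
  -- the partition
  refine ⟨fun ℓ => Finset.univ.filter (fun i => f i = ℓ), ?_, ?_, ?_⟩
  · intro ℓ ℓ' hne'
    simp only [Finset.disjoint_left, Finset.mem_filter]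
    rintro i ⟨-, h1⟩ ⟨-, h2⟩
    exact hne' (h1 ▸ h2 ▸ rfl)
  · ext i
    simp only [Finset.mem_biUnion, Finset.mem_univ, iff_true]
    exact ⟨f i, by simp⟩
  · -- per-block independence
    have key : ∀ ℓ : Fin k,
        LinearIndependent K
          (fun i : (Finset.univ.filter (fun i => f i = ℓ) : Finset ι) => b i ℓ) := by
      intro ℓ
      have h1 : LinearIndependent K
          (fun i : (Finset.univ.filter (fun i => f i = ℓ) : Finset ι) => g i (f i)) :=
        hindep.comp _ Subtype.val_injective
      have h2 : (fun i : (Finset.univ.filter (fun i => f i = ℓ) : Finset ι) =>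
          (LinearMap.single K (fun _ : Fin k => V) ℓ) (b i ℓ)) =
          (fun i : (Finset.univ.filter (fun i => f i = ℓ) : Finset ι) => g i (f i)) := by
        funext i
        have hi : f i = ℓ := (Finset.mem_filter.1 i.2).2
        funext m
        simp only [hg, hi, LinearMap.single_apply, Pi.single_apply]
        by_cases h : ℓ = m
        · subst h; simp
        · rw [if_neg (show ¬ m = ℓ from fun hh => h hh.symm), if_neg h]
      refine LinearIndependent.of_comp (LinearMap.single K (fun _ : Fin k => V) ℓ) ?_
      show LinearIndependent K
        (fun i : (Finset.univ.filter (fun i => f i = ℓ) : Finset ι) =>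
          (LinearMap.single K (fun _ : Fin k => V) ℓ) (b i ℓ))
      rw [h2]; exact h1
    -- cardinalities
    have hcardle : ∀ ℓ : Fin k, (Finset.univ.filter (fun i => f i = ℓ)).card ≤ n := by
      intro ℓ
      have := (key ℓ).fintype_card_le_finrank
      rwa [Fintype.card_coe] at this
    have hcardsum : ∑ ℓ : Fin k, (Finset.univ.filter (fun i => f i = ℓ)).card
        = Fintype.card ι := by
      rw [← Finset.card_biUnion]
      · congr 1
        ext i
        simp only [Finset.mem_biUnion, Finset.mem_univ, iff_true]
        exact ⟨f i, by simp⟩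
      · intro ℓ _ ℓ' _ hne'
        simp only [Finset.disjoint_left, Finset.mem_filter]
        rintro i ⟨-, h1⟩ ⟨-, h2⟩
        exact hne' (h1 ▸ h2 ▸ rfl)
    have hcardι : Fintype.card ι = k * n := by
      have := Module.finrank_eq_card_basis b
      rw [Module.finrank_pi_fintype] at this
      simp only [← hn, Finset.sum_const, Finset.card_univ, Fintype.card_fin,
        smul_eq_mul] at this
      omega
    have hcards : ∀ ℓ : Fin k, (Finset.univ.filter (fun i => f i = ℓ)).card = n := by
      have h := Finset.sum_eq_sum_iff_of_le (s := (Finset.univ : Finset (Fin k)))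
        (f := fun ℓ => (Finset.univ.filter (fun i => f i = ℓ)).card)
        (g := fun _ => n) (fun ℓ _ => hcardle ℓ)
      have heq : ∑ ℓ : Fin k, (Finset.univ.filter (fun i => f i = ℓ)).card
          = ∑ _ℓ : Fin k, n := by
        rw [hcardsum, hcardι]; simp [mul_comm]
      intro ℓ
      exact (h.1 heq) ℓ (Finset.mem_univ ℓ)
    intro ℓ
    refine ⟨key ℓ, ?_⟩
    refine (key ℓ).span_eq_top_of_card_eq_finrank' ?_
    rw [Fintype.card_coe, hcards ℓ]
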